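/- Let G₀, G₁, G₂, ... be differentiable functions from [0,1] to ℝ with convex derivatives, and suppose sup_{t∈[0,1]}|G_k(t) - G₀(t)| → 0. Then liminf_{k→∞} inf_{t∈[0,1]} (G_k'(t) - G₀'(t)) ≥ 0. -/
import Mathlib


open Set Filter


lemma aux_mvt (F : ℝ → ℝ) (hF : DifferentiableOn ℝ F (Icc 0 1)) {a b : ℝ}
    (ha : 0 ≤ a) (hab : a < b) (hb : b ≤ 1) :
    ∃ ξ ∈ Ioo a b, derivWithin F (Icc 0 1) ξ = (F b - F a) / (b - a) := by
  apply exists_hasDerivAt_eq_slope F _ hab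
  · exact hF.continuousOn.mono (Icc_subset_Icc ha hb)
  · intro x hx
    have hmem : x ∈ Icc (0:ℝ) 1 := ⟨ha.trans hx.1.le, hx.2.le.trans hb⟩
    have hnhds : Icc (0:ℝ) 1 ∈ nhds x :=
      Icc_mem_nhds (lt_of_le_of_lt ha hx.1) (lt_of_lt_of_le hx.2 hb)
    exact ((hF x hmem).hasDerivWithinAt).hasDerivAt hnhds

lemma aux_conv_lower (g : ℝ → ℝ) (hg : ConvexOn ℝ (Icc 0 1) g) {t h ξ1 ξ3 : ℝ}
    (hh : 0 < h) (ht : t ∈ Icc (0:ℝ) 1) (h3 : t + 3*h ≤ 1)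
    (hξ1 : ξ1 ∈ Ioo t (t+h)) (hξ3 : ξ3 ∈ Ioo (t+2*h) (t+3*h)) :
    g ξ1 - |g ξ3 - g ξ1| ≤ g t := by
  have hξ3m : ξ3 ∈ Icc (0:ℝ) 1 := by
    constructor
    · nlinarith [ht.1, hξ3.1]
    · nlinarith [hξ3.2]
  have h13 : ξ1 < ξ3 := by nlinarith [hξ1.2, hξ3.1]
  have hslope := hg.slope_mono_adjacent ht hξ3m hξ1.1 h13
  -- (g ξ1 - g t)/(ξ1 - t) ≤ (g ξ3 - g ξ1)/(ξ3 - ξ1)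
  have hA : (0:ℝ) < ξ1 - t := by linarith [hξ1.1]
  have hB : (0:ℝ) < ξ3 - ξ1 := by linarith
  have hAB : ξ1 - t ≤ ξ3 - ξ1 := by nlinarith [hξ1.2, hξ3.1]
  rw [div_le_div_iff₀ hA hB] at hslope
  rcases le_total (g ξ1) (g ξ3) with hc | hc
  · rw [abs_of_nonneg (by linarith)]
    nlinarith
  · rw [abs_of_nonpos (by linarith)]
    nlinarith

lemma aux_conv_lower' (g : ℝ → ℝ) (hg : ConvexOn ℝ (Icc 0 1) g) {t h ξ1 ξ3 : ℝ}
    (hh : 0 < h) (ht : t ∈ Icc (0:ℝ) 1) (h3 : 0 ≤ t - 3*h)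
    (hξ1 : ξ1 ∈ Ioo (t-h) t) (hξ3 : ξ3 ∈ Ioo (t-3*h) (t-2*h)) :
    g ξ1 - |g ξ3 - g ξ1| ≤ g t := by
  have hξ3m : ξ3 ∈ Icc (0:ℝ) 1 := by
    constructor
    · nlinarith [hξ3.1]
    · nlinarith [ht.2, hξ3.2]
  have h31 : ξ3 < ξ1 := by nlinarith [hξ1.1, hξ3.2]
  have hslope := hg.slope_mono_adjacent hξ3m ht h31 hξ1.2
  -- (g ξ1 - g ξ3)/(ξ1 - ξ3) ≤ (g t - g ξ1)/(t - ξ1)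
  have hA : (0:ℝ) < t - ξ1 := by linarith [hξ1.2]
  have hB : (0:ℝ) < ξ1 - ξ3 := by linarith
  have hAB : t - ξ1 ≤ ξ1 - ξ3 := by nlinarith [hξ1.1, hξ3.2]
  rw [div_le_div_iff₀ hB hA] at hslope
  rcases le_total (g ξ1) (g ξ3) with hc | hc
  · rw [abs_of_nonneg (by linarith)]
    nlinarith
  · rw [abs_of_nonpos (by linarith)]
    nlinarith

lemma aux_cont_at_zero (F : ℝ → ℝ) (hF : DifferentiableOn ℝ F (Icc 0 1))
    (hc : ConvexOn ℝ (Icc 0 1) (fun t => derivWithin F (Icc 0 1) t)) :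
    ContinuousWithinAt (fun t => derivWithin F (Icc 0 1) t) (Icc 0 1) 0 := by
  set g : ℝ → ℝ := fun t => derivWithin F (Icc 0 1) t with hgdef
  set σ : ℝ → ℝ := fun s => (g s - g (1/2)) / (s - 1/2) with hσdef
  have hIooSub : Ioo (0:ℝ) (1/2) ⊆ Icc (0:ℝ) 1 := fun x hx => ⟨hx.1.le, by linarith [hx.2]⟩
  have hhalf : (1/2:ℝ) ∈ Icc (0:ℝ) 1 := by norm_num
  have hzero : (0:ℝ) ∈ Icc (0:ℝ) 1 := by norm_num
  have hmono : MonotoneOn σ (Ioo (0:ℝ) (1/2)) := fun x hx y hy hxy =>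
    hc.secant_mono hhalf (hIooSub hx) (hIooSub hy) (ne_of_lt hx.2) (ne_of_lt hy.2) hxy
  have hbdd : BddBelow (σ '' Ioo (0:ℝ) (1/2)) := by
    refine ⟨σ 0, ?_⟩
    rintro z ⟨x, hx, rfl⟩
    exact hc.secant_mono hhalf hzero (hIooSub hx) (by norm_num) (ne_of_lt hx.2) hx.1.le
  have hne : (Ioo (0:ℝ) (1/2)).Nonempty := ⟨1/4, by norm_num⟩
  have hσt : Tendsto σ (nhdsWithin 0 (Ioi 0)) (nhds (sInf (σ '' Ioo 0 (1/2)))) :=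
    hmono.tendsto_nhdsWithin_Ioo_right hne hbdd
  set m := sInf (σ '' Ioo (0:ℝ) (1/2)) with hmdef
  set L : ℝ := g (1/2) + (0 - 1/2) * m with hLdef
  have hgt : Tendsto g (nhdsWithin 0 (Ioi (0:ℝ))) (nhds L) := by
    have h1 : Tendsto (fun s => g (1/2) + (s - 1/2) * σ s) (nhdsWithin 0 (Ioi 0)) (nhds L) := by
      apply Tendsto.add tendsto_const_nhds
      exact ((tendsto_id.mono_left nhdsWithin_le_nhds).sub tendsto_const_nhds).mul hσt
    apply h1.congr'
    filter_upwards [Ioo_mem_nhdsGT_of_mem (⟨le_refl (0:ℝ), by norm_num⟩ : (0:ℝ) ∈ Ico (0:ℝ) (1/2))] with s hs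
    have hs5 : s - 1/2 ≠ 0 := by have := hs.2; intro hcon; rw [sub_eq_zero] at hcon; exact (ne_of_lt this) hcon
    show g (1/2) + (s - 1/2) * ((g s - g (1/2)) / (s - 1/2)) = g s
    rw [mul_comm, div_mul_cancel₀ _ hs5]
    ring
  have hslope : Tendsto (slope F 0) (nhdsWithin 0 (Icc 0 1 \ {0})) (nhds (g 0)) :=
    hasDerivWithinAt_iff_tendsto_slope.mp ((hF 0 hzero).hasDerivWithinAt)
  have hsub2 : Ioo (0:ℝ) (1/2) ⊆ Icc 0 1 \ {0} := fun x hx => ⟨hIooSub hx, ne_of_gt hx.1⟩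
  have hslope2 : Tendsto (slope F 0) (nhdsWithin 0 (Ioo 0 (1/2))) (nhds (g 0)) :=
    hslope.mono_left (nhdsWithin_mono _ hsub2)
  have hch : ∀ s : ℝ, ∃ η : ℝ, s ∈ Ioo (0:ℝ) (1/2) → η ∈ Ioo 0 s ∧ g η = slope F 0 s := by
    intro s
    by_cases hs : s ∈ Ioo (0:ℝ) (1/2)
    · obtain ⟨ξ, hξ, hval⟩ := aux_mvt F hF (le_refl (0:ℝ)) hs.1 (by linarith [hs.2])
      refine ⟨ξ, fun _ => ⟨hξ, ?_⟩⟩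
      show derivWithin F (Icc 0 1) ξ = slope F 0 s
      rw [hval, slope_def_field]
    · exact ⟨0, fun h => absurd h hs⟩
  choose η hη using hch
  have hηt : Tendsto η (nhdsWithin 0 (Ioo (0:ℝ) (1/2))) (nhdsWithin 0 (Ioi 0)) := by
    rw [tendsto_nhdsWithin_iff]
    constructor
    · apply tendsto_of_tendsto_of_tendsto_of_le_of_le' tendsto_const_nhds
        (tendsto_id.mono_left nhdsWithin_le_nhds)
      · filter_upwards [self_mem_nhdsWithin] with s hs
        exact (hη s hs).1.1.le
      · filter_upwards [self_mem_nhdsWithin] with s hs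
        exact (hη s hs).1.2.le
    · filter_upwards [self_mem_nhdsWithin] with s hs
      exact (hη s hs).1.1
  have hcomp : Tendsto (fun s => g (η s)) (nhdsWithin 0 (Ioo (0:ℝ) (1/2))) (nhds L) := hgt.comp hηt
  have hcomp' : Tendsto (slope F 0) (nhdsWithin 0 (Ioo (0:ℝ) (1/2))) (nhds L) := by
    apply hcomp.congr'
    filter_upwards [self_mem_nhdsWithin] with s hs
    exact (hη s hs).2
  haveI : (nhdsWithin (0:ℝ) (Ioo 0 (1/2))).NeBot := by
    apply mem_closure_iff_nhdsWithin_neBot.mp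
    rw [closure_Ioo (by norm_num : (0:ℝ) ≠ 1/2)]
    exact ⟨le_refl 0, by norm_num⟩
  have h0L : g 0 = L := tendsto_nhds_unique hslope2 hcomp'
  show Tendsto g (nhdsWithin 0 (Icc 0 1)) (nhds (g 0))
  rw [show Icc (0:ℝ) 1 = insert 0 (Ioc 0 1) from (Ioc_insert_left zero_le_one).symm,
    nhdsWithin_insert, tendsto_sup]
  constructor
  · exact tendsto_pure_nhds g 0
  · rw [h0L]
    exact hgt.mono_left (nhdsWithin_mono _ Ioc_subset_Ioi_self)

lemma aux_cont_at_one (F : ℝ → ℝ) (hF : DifferentiableOn ℝ F (Icc 0 1))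
    (hc : ConvexOn ℝ (Icc 0 1) (fun t => derivWithin F (Icc 0 1) t)) :
    ContinuousWithinAt (fun t => derivWithin F (Icc 0 1) t) (Icc 0 1) 1 := by
  set g : ℝ → ℝ := fun t => derivWithin F (Icc 0 1) t with hgdef
  set σ : ℝ → ℝ := fun s => (g s - g (1/2)) / (s - 1/2) with hσdef
  have hIooSub : Ioo (1/2:ℝ) 1 ⊆ Icc (0:ℝ) 1 := fun x hx => ⟨by linarith [hx.1], hx.2.le⟩
  have hhalf : (1/2:ℝ) ∈ Icc (0:ℝ) 1 := by norm_num
  have hone : (1:ℝ) ∈ Icc (0:ℝ) 1 := by norm_num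
  have hmono : MonotoneOn σ (Ioo (1/2:ℝ) 1) := fun x hx y hy hxy =>
    hc.secant_mono hhalf (hIooSub hx) (hIooSub hy) (ne_of_gt hx.1) (ne_of_gt hy.1) hxy
  have hbdd : BddAbove (σ '' Ioo (1/2:ℝ) 1) := by
    refine ⟨σ 1, ?_⟩
    rintro z ⟨x, hx, rfl⟩
    exact hc.secant_mono hhalf (hIooSub hx) hone (ne_of_gt hx.1) (by norm_num) hx.2.le
  have hne : (Ioo (1/2:ℝ) 1).Nonempty := ⟨3/4, by norm_num⟩
  have hσt : Tendsto σ (nhdsWithin 1 (Iio 1)) (nhds (sSup (σ '' Ioo (1/2:ℝ) 1))) :=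
    hmono.tendsto_nhdsWithin_Ioo_left hne hbdd
  set M := sSup (σ '' Ioo (1/2:ℝ) 1) with hMdef
  set L : ℝ := g (1/2) + (1 - 1/2) * M with hLdef
  have hgt : Tendsto g (nhdsWithin 1 (Iio (1:ℝ))) (nhds L) := by
    have h1 : Tendsto (fun s => g (1/2) + (s - 1/2) * σ s) (nhdsWithin 1 (Iio 1)) (nhds L) := by
      apply Tendsto.add tendsto_const_nhds
      exact ((tendsto_id.mono_left nhdsWithin_le_nhds).sub tendsto_const_nhds).mul hσt
    apply h1.congr'
    filter_upwards [Ioo_mem_nhdsLT_of_mem (⟨by norm_num, le_refl (1:ℝ)⟩ : (1:ℝ) ∈ Ioc (1/2:ℝ) 1)] with s hs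
    have hs5 : s - 1/2 ≠ 0 := by
      have := hs.1; intro hcon; rw [sub_eq_zero] at hcon; exact (ne_of_gt this) hcon
    show g (1/2) + (s - 1/2) * ((g s - g (1/2)) / (s - 1/2)) = g s
    rw [mul_comm, div_mul_cancel₀ _ hs5]
    ring
  have hslope : Tendsto (slope F 1) (nhdsWithin 1 (Icc 0 1 \ {1})) (nhds (g 1)) :=
    hasDerivWithinAt_iff_tendsto_slope.mp ((hF 1 hone).hasDerivWithinAt)
  have hsub2 : Ioo (1/2:ℝ) 1 ⊆ Icc 0 1 \ {1} := fun x hx => ⟨hIooSub hx, ne_of_lt hx.2⟩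
  have hslope2 : Tendsto (slope F 1) (nhdsWithin 1 (Ioo (1/2:ℝ) 1)) (nhds (g 1)) :=
    hslope.mono_left (nhdsWithin_mono _ hsub2)
  have hch : ∀ s : ℝ, ∃ η : ℝ, s ∈ Ioo (1/2:ℝ) 1 → η ∈ Ioo s 1 ∧ g η = slope F 1 s := by
    intro s
    by_cases hs : s ∈ Ioo (1/2:ℝ) 1
    · obtain ⟨ξ, hξ, hval⟩ := aux_mvt F hF (by linarith [hs.1]) hs.2 (le_refl (1:ℝ))
      refine ⟨ξ, fun _ => ⟨hξ, ?_⟩⟩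
      show derivWithin F (Icc 0 1) ξ = slope F 1 s
      rw [hval, slope_def_field, ← neg_sub (F 1) (F s), ← neg_sub (1:ℝ) s, neg_div_neg_eq]
    · exact ⟨0, fun h => absurd h hs⟩
  choose η hη using hch
  have hηt : Tendsto η (nhdsWithin 1 (Ioo (1/2:ℝ) 1)) (nhdsWithin 1 (Iio 1)) := by
    rw [tendsto_nhdsWithin_iff]
    constructor
    · apply tendsto_of_tendsto_of_tendsto_of_le_of_le'
        (tendsto_id.mono_left nhdsWithin_le_nhds) tendsto_const_nhds
      · filter_upwards [self_mem_nhdsWithin] with s hs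
        exact (hη s hs).1.1.le
      · filter_upwards [self_mem_nhdsWithin] with s hs
        exact (hη s hs).1.2.le
    · filter_upwards [self_mem_nhdsWithin] with s hs
      exact (hη s hs).1.2
  have hcomp : Tendsto (fun s => g (η s)) (nhdsWithin 1 (Ioo (1/2:ℝ) 1)) (nhds L) := hgt.comp hηt
  have hcomp' : Tendsto (slope F 1) (nhdsWithin 1 (Ioo (1/2:ℝ) 1)) (nhds L) := by
    apply hcomp.congr'
    filter_upwards [self_mem_nhdsWithin] with s hs
    exact (hη s hs).2
  haveI : (nhdsWithin (1:ℝ) (Ioo (1/2:ℝ) 1)).NeBot := by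
    apply mem_closure_iff_nhdsWithin_neBot.mp
    rw [closure_Ioo (by norm_num : (1/2:ℝ) ≠ 1)]
    exact ⟨by norm_num, le_refl 1⟩
  have h1L : g 1 = L := tendsto_nhds_unique hslope2 hcomp'
  show Tendsto g (nhdsWithin 1 (Icc 0 1)) (nhds (g 1))
  rw [show Icc (0:ℝ) 1 = insert 1 (Ico 0 1) from (Ico_insert_right zero_le_one).symm,
    nhdsWithin_insert, tendsto_sup]
  constructor
  · exact tendsto_pure_nhds g 1
  · rw [h1L]
    exact hgt.mono_left (nhdsWithin_mono _ Ico_subset_Iio_self)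

lemma aux_cont (F : ℝ → ℝ) (hF : DifferentiableOn ℝ F (Icc 0 1))
    (hc : ConvexOn ℝ (Icc 0 1) (fun t => derivWithin F (Icc 0 1) t)) :
    ContinuousOn (fun t => derivWithin F (Icc 0 1) t) (Icc 0 1) := by
  intro x hx
  rcases eq_or_lt_of_le hx.1 with h0 | h0
  · rw [← h0]; exact aux_cont_at_zero F hF hc
  rcases eq_or_lt_of_le hx.2 with h1 | h1
  · rw [h1]; exact aux_cont_at_one F hF hc
  have hIoo := hc.continuousOn_interior
  rw [interior_Icc] at hIoo
  exact (hIoo.continuousAt (Ioo_mem_nhds h0 h1)).continuousWithinAt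

lemma aux_key (G : ℕ → ℝ → ℝ)
    (hdiff : ∀ k, DifferentiableOn ℝ (G k) (Icc (0 : ℝ) 1))
    (hconv : ∀ k, ConvexOn ℝ (Icc (0 : ℝ) 1) (fun t => derivWithin (G k) (Icc (0 : ℝ) 1) t))
    (hunif : Tendsto (fun k => ⨆ t : Icc (0 : ℝ) 1, |G k t - G 0 t|) atTop (nhds 0))
    {ε : ℝ} (hε : 0 < ε) :
    ∀ᶠ k in atTop, ∀ t ∈ Icc (0:ℝ) 1,
      -ε ≤ derivWithin (G k) (Icc (0 : ℝ) 1) t - derivWithin (G 0) (Icc (0 : ℝ) 1) t := by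
  set D : ℕ → ℝ := fun k => ⨆ t : Icc (0:ℝ) 1, |G k t - G 0 t| with hDdef
  have hDk : ∀ k, ∀ x ∈ Icc (0:ℝ) 1, |G k x - G 0 x| ≤ D k := by
    intro k x hx
    have hcont : ContinuousOn (fun x => |G k x - G 0 x|) (Icc 0 1) :=
      ((hdiff k).continuousOn.sub (hdiff 0).continuousOn).abs
    have hBdd : BddAbove (range fun t : Icc (0:ℝ) 1 => |G k t - G 0 t|) := by
      obtain ⟨M, hM⟩ := (isCompact_Icc.image_of_continuousOn hcont).bddAbove
      refine ⟨M, ?_⟩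
      rintro _ ⟨⟨x', hx'⟩, rfl⟩
      exact hM (mem_image_of_mem _ hx')
    exact le_ciSup hBdd ⟨x, hx⟩
  have hcont0 : ContinuousOn (fun t => derivWithin (G 0) (Icc (0:ℝ) 1) t) (Icc 0 1) :=
    aux_cont (G 0) (hdiff 0) (hconv 0)
  obtain ⟨δ, hδpos, hδ⟩ := Metric.uniformContinuousOn_iff.mp
    (isCompact_Icc.uniformContinuousOn_of_continuous hcont0) (ε/8) (by linarith)
  set h : ℝ := min (δ/4) (1/8 : ℝ) with hhdef
  have hhpos : 0 < h := lt_min (by linarith) (by norm_num)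
  have hh8 : h ≤ 1/8 := min_le_right _ _
  have hh3δ : 3*h < δ := by
    have := min_le_left (δ/4) (1/8:ℝ)
    have : h ≤ δ/4 := this
    linarith
  have hev : ∀ᶠ k in atTop, D k < ε * h / 16 := hunif.eventually_lt_const (by positivity)
  filter_upwards [hev] with k hDkε
  intro t ht
  have hchord : ∀ a b : ℝ, 0 ≤ a → a < b → b ≤ 1 →
      |(G k b - G k a)/(b-a) - (G 0 b - G 0 a)/(b-a)| ≤ 2 * D k / (b - a) := by
    intro a b ha hab hb
    have hba : (0:ℝ) < b - a := by linarith
    have heq : (G k b - G k a)/(b-a) - (G 0 b - G 0 a)/(b-a)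
        = ((G k b - G 0 b) - (G k a - G 0 a))/(b-a) := by ring
    rw [heq, abs_div, abs_of_pos hba]
    gcongr
    calc |(G k b - G 0 b) - (G k a - G 0 a)|
        ≤ |G k b - G 0 b| + |G k a - G 0 a| := abs_sub _ _
      _ ≤ D k + D k := add_le_add (hDk k b ⟨by linarith, hb⟩) (hDk k a ⟨ha, by linarith⟩)
      _ = 2 * D k := by ring
  have h2Dh : 2 * D k / h < ε/8 := by
    rw [div_lt_iff₀ hhpos]
    nlinarith
  rcases le_or_gt t (1/2) with hthalf | hthalf
  · -- right-side case
    have ht3 : t + 3*h ≤ 1 := by linarith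
    obtain ⟨ξ1, hξ1, hv1⟩ := aux_mvt (G k) (hdiff k) ht.1 (show t < t + h by linarith) (by linarith)
    obtain ⟨ξ3, hξ3, hv3⟩ := aux_mvt (G k) (hdiff k) (show (0:ℝ) ≤ t + 2*h by linarith [ht.1])
      (show t + 2*h < t + 3*h by linarith) (by linarith)
    obtain ⟨η1, hη1, hw1⟩ := aux_mvt (G 0) (hdiff 0) ht.1 (show t < t + h by linarith) (by linarith)
    obtain ⟨η3, hη3, hw3⟩ := aux_mvt (G 0) (hdiff 0) (show (0:ℝ) ≤ t + 2*h by linarith [ht.1])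
      (show t + 2*h < t + 3*h by linarith) (by linarith)
    have hc1 := hchord t (t+h) ht.1 (by linarith) (by linarith)
    have hc3 := hchord (t+2*h) (t+3*h) (by linarith [ht.1]) (by linarith) (by linarith)
    have e1 : t + h - t = h := by ring
    have e3 : t + 3*h - (t + 2*h) = h := by ring
    rw [e1] at hv1 hw1 hc1
    rw [e3] at hv3 hw3 hc3
    have hlow : derivWithin (G k) (Icc 0 1) ξ1
        - |derivWithin (G k) (Icc 0 1) ξ3 - derivWithin (G k) (Icc 0 1) ξ1|
        ≤ derivWithin (G k) (Icc 0 1) t :=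
      aux_conv_lower _ (hconv k) hhpos ht ht3 hξ1 hξ3
    have hη1m : η1 ∈ Icc (0:ℝ) 1 := ⟨by linarith [hη1.1, ht.1], by linarith [hη1.2]⟩
    have hη3m : η3 ∈ Icc (0:ℝ) 1 := ⟨by linarith [hη3.1, ht.1], by linarith [hη3.2]⟩
    have hd1 : |derivWithin (G 0) (Icc 0 1) η1 - derivWithin (G 0) (Icc 0 1) t| < ε/8 := by
      have := hδ η1 hη1m t ht (by
        rw [Real.dist_eq]
        rw [abs_lt]; constructor <;> linarith [hη1.1, hη1.2, hδpos, hh3δ, hhpos])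
      rwa [Real.dist_eq] at this
    have hd3 : |derivWithin (G 0) (Icc 0 1) η3 - derivWithin (G 0) (Icc 0 1) t| < ε/8 := by
      have := hδ η3 hη3m t ht (by
        rw [Real.dist_eq]
        rw [abs_lt]; constructor <;> linarith [hη3.1, hη3.2, hδpos, hh3δ, hhpos])
      rwa [Real.dist_eq] at this
    have habs1 : |derivWithin (G k) (Icc 0 1) ξ1 - derivWithin (G 0) (Icc 0 1) t| < ε/4 := by
      calc |derivWithin (G k) (Icc 0 1) ξ1 - derivWithin (G 0) (Icc 0 1) t|
          ≤ |derivWithin (G k) (Icc 0 1) ξ1 - derivWithin (G 0) (Icc 0 1) η1|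
            + |derivWithin (G 0) (Icc 0 1) η1 - derivWithin (G 0) (Icc 0 1) t| := abs_sub_le _ _ _
        _ < 2 * D k / h + ε/8 := by
            apply add_lt_add_of_le_of_lt _ hd1
            rw [hv1, hw1]; exact hc1
        _ < ε/8 + ε/8 := by linarith
        _ = ε/4 := by ring
    have habs3 : |derivWithin (G k) (Icc 0 1) ξ3 - derivWithin (G 0) (Icc 0 1) t| < ε/4 := by
      calc |derivWithin (G k) (Icc 0 1) ξ3 - derivWithin (G 0) (Icc 0 1) t|
          ≤ |derivWithin (G k) (Icc 0 1) ξ3 - derivWithin (G 0) (Icc 0 1) η3|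
            + |derivWithin (G 0) (Icc 0 1) η3 - derivWithin (G 0) (Icc 0 1) t| := abs_sub_le _ _ _
        _ < 2 * D k / h + ε/8 := by
            apply add_lt_add_of_le_of_lt _ hd3
            rw [hv3, hw3]; exact hc3
        _ < ε/8 + ε/8 := by linarith
        _ = ε/4 := by ring
    have habs13 : |derivWithin (G k) (Icc 0 1) ξ3 - derivWithin (G k) (Icc 0 1) ξ1| < ε/2 := by
      calc |derivWithin (G k) (Icc 0 1) ξ3 - derivWithin (G k) (Icc 0 1) ξ1|
          ≤ |derivWithin (G k) (Icc 0 1) ξ3 - derivWithin (G 0) (Icc 0 1) t|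
            + |derivWithin (G 0) (Icc 0 1) t - derivWithin (G k) (Icc 0 1) ξ1| := abs_sub_le _ _ _
        _ = |derivWithin (G k) (Icc 0 1) ξ3 - derivWithin (G 0) (Icc 0 1) t|
            + |derivWithin (G k) (Icc 0 1) ξ1 - derivWithin (G 0) (Icc 0 1) t| := by
              rw [abs_sub_comm (derivWithin (G 0) (Icc 0 1) t)]
        _ < ε/4 + ε/4 := add_lt_add habs3 habs1
        _ = ε/2 := by ring
    have hl1 := abs_lt.mp habs1
    linarith [hl1.1]
  · -- left-side case
    have ht3 : 0 ≤ t - 3*h := by linarith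
    obtain ⟨ξ1, hξ1, hv1⟩ := aux_mvt (G k) (hdiff k) (show (0:ℝ) ≤ t - h by linarith)
      (show t - h < t by linarith) ht.2
    obtain ⟨ξ3, hξ3, hv3⟩ := aux_mvt (G k) (hdiff k) (show (0:ℝ) ≤ t - 3*h by linarith)
      (show t - 3*h < t - 2*h by linarith) (by linarith [ht.2])
    obtain ⟨η1, hη1, hw1⟩ := aux_mvt (G 0) (hdiff 0) (show (0:ℝ) ≤ t - h by linarith)
      (show t - h < t by linarith) ht.2
    obtain ⟨η3, hη3, hw3⟩ := aux_mvt (G 0) (hdiff 0) (show (0:ℝ) ≤ t - 3*h by linarith)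
      (show t - 3*h < t - 2*h by linarith) (by linarith [ht.2])
    have hc1 := hchord (t-h) t (by linarith) (by linarith) ht.2
    have hc3 := hchord (t-3*h) (t-2*h) (by linarith) (by linarith) (by linarith [ht.2])
    have e1 : t - (t - h) = h := by ring
    have e3 : t - 2*h - (t - 3*h) = h := by ring
    rw [e1] at hv1 hw1 hc1
    rw [e3] at hv3 hw3 hc3
    have hlow : derivWithin (G k) (Icc 0 1) ξ1
        - |derivWithin (G k) (Icc 0 1) ξ3 - derivWithin (G k) (Icc 0 1) ξ1|
        ≤ derivWithin (G k) (Icc 0 1) t :=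
      aux_conv_lower' _ (hconv k) hhpos ht ht3 hξ1 hξ3
    have hη1m : η1 ∈ Icc (0:ℝ) 1 := ⟨by linarith [hη1.1], by linarith [hη1.2, ht.2]⟩
    have hη3m : η3 ∈ Icc (0:ℝ) 1 := ⟨by linarith [hη3.1], by linarith [hη3.2, ht.2]⟩
    have hd1 : |derivWithin (G 0) (Icc 0 1) η1 - derivWithin (G 0) (Icc 0 1) t| < ε/8 := by
      have := hδ η1 hη1m t ht (by
        rw [Real.dist_eq]
        rw [abs_lt]; constructor <;> [linarith [hη1.1]; linarith [hη1.2]])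
      rwa [Real.dist_eq] at this
    have hd3 : |derivWithin (G 0) (Icc 0 1) η3 - derivWithin (G 0) (Icc 0 1) t| < ε/8 := by
      have := hδ η3 hη3m t ht (by
        rw [Real.dist_eq]
        rw [abs_lt]; constructor <;> [linarith [hη3.1]; linarith [hη3.2]])
      rwa [Real.dist_eq] at this
    have habs1 : |derivWithin (G k) (Icc 0 1) ξ1 - derivWithin (G 0) (Icc 0 1) t| < ε/4 := by
      calc |derivWithin (G k) (Icc 0 1) ξ1 - derivWithin (G 0) (Icc 0 1) t|
          ≤ |derivWithin (G k) (Icc 0 1) ξ1 - derivWithin (G 0) (Icc 0 1) η1|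
            + |derivWithin (G 0) (Icc 0 1) η1 - derivWithin (G 0) (Icc 0 1) t| := abs_sub_le _ _ _
        _ < 2 * D k / h + ε/8 := by
            apply add_lt_add_of_le_of_lt _ hd1
            rw [hv1, hw1]; exact hc1
        _ < ε/8 + ε/8 := by linarith
        _ = ε/4 := by ring
    have habs3 : |derivWithin (G k) (Icc 0 1) ξ3 - derivWithin (G 0) (Icc 0 1) t| < ε/4 := by
      calc |derivWithin (G k) (Icc 0 1) ξ3 - derivWithin (G 0) (Icc 0 1) t|
          ≤ |derivWithin (G k) (Icc 0 1) ξ3 - derivWithin (G 0) (Icc 0 1) η3|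
            + |derivWithin (G 0) (Icc 0 1) η3 - derivWithin (G 0) (Icc 0 1) t| := abs_sub_le _ _ _
        _ < 2 * D k / h + ε/8 := by
            apply add_lt_add_of_le_of_lt _ hd3
            rw [hv3, hw3]; exact hc3
        _ < ε/8 + ε/8 := by linarith
        _ = ε/4 := by ring
    have habs13 : |derivWithin (G k) (Icc 0 1) ξ3 - derivWithin (G k) (Icc 0 1) ξ1| < ε/2 := by
      calc |derivWithin (G k) (Icc 0 1) ξ3 - derivWithin (G k) (Icc 0 1) ξ1|
          ≤ |derivWithin (G k) (Icc 0 1) ξ3 - derivWithin (G 0) (Icc 0 1) t|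
            + |derivWithin (G 0) (Icc 0 1) t - derivWithin (G k) (Icc 0 1) ξ1| := abs_sub_le _ _ _
        _ = |derivWithin (G k) (Icc 0 1) ξ3 - derivWithin (G 0) (Icc 0 1) t|
            + |derivWithin (G k) (Icc 0 1) ξ1 - derivWithin (G 0) (Icc 0 1) t| := by
              rw [abs_sub_comm (derivWithin (G 0) (Icc 0 1) t)]
        _ < ε/4 + ε/4 := add_lt_add habs3 habs1
        _ = ε/2 := by ring
    have hl1 := abs_lt.mp habs1
    linarith [hl1.1]

theorem stmt_6 (G : ℕ → ℝ → ℝ)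
    (hdiff : ∀ k, DifferentiableOn ℝ (G k) (Icc (0 : ℝ) 1))
    (hconv : ∀ k, ConvexOn ℝ (Icc (0 : ℝ) 1) (fun t => derivWithin (G k) (Icc (0 : ℝ) 1) t))
    (hunif : Tendsto (fun k => ⨆ t : Icc (0 : ℝ) 1, |G k t - G 0 t|) atTop (nhds 0)) :
    0 ≤ Filter.liminf (fun k => ⨅ t : Icc (0 : ℝ) 1,
        (derivWithin (G k) (Icc (0 : ℝ) 1) t - derivWithin (G 0) (Icc (0 : ℝ) 1) t))
      atTop := by
  haveI : Nonempty (Icc (0:ℝ) 1) := ⟨⟨0, by norm_num⟩⟩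
  set u : ℕ → ℝ := fun k => ⨅ t : Icc (0 : ℝ) 1,
      (derivWithin (G k) (Icc (0 : ℝ) 1) t - derivWithin (G 0) (Icc (0 : ℝ) 1) t) with hu
  have hstep : ∀ ε : ℝ, 0 < ε → -ε ≤ liminf u atTop := by
    intro ε hε
    have hev : ∀ᶠ k in atTop, -ε ≤ u k := by
      filter_upwards [aux_key G hdiff hconv hunif hε] with k hk
      exact le_ciInf fun t => hk t t.2
    rw [liminf_eq]
    by_cases hb : BddAbove { a | ∀ᶠ n in atTop, a ≤ u n }
    · exact le_csSup hb hev
    · rw [Real.sSup_of_not_bddAbove hb]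
      linarith
  by_contra hlt
  push_neg at hlt
  have := hstep (-(liminf u atTop) / 2) (by linarith)
  linarith
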